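/- arXiv:2509.01823 — 2 statements merged into one kernel-verified Lean document; each statement's English description precedes it below -/
import Mathlib

section
/- The circulant graph Γ(n, ±{1,2}) on an odd number n ≥ 5 of vertices is not Fibonacci cordial: for every injective map f from its vertices into Fibonacci numbers, the induced edge-label counts satisfy |e_f(0) − e_f(1)| ≥ 2. -/
/-- The circulant graph `Γ(n, ±{1,...,j})` on `ℤ/nℤ`: `u ~ v` iff `v - u ≡ ±k (mod n)`
for some `1 ≤ k ≤ j`. -/
def circulant (n j : ℕ) : SimpleGraph (ZMod n) :=
  SimpleGraph.fromRel (fun u v => ∃ k : ℕ, 1 ≤ k ∧ k ≤ j ∧ v - u = (k : ZMod n))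

/-- The induced edge label `(f u + f v) mod 2` on an edge of a graph. -/
def edgeLabelN {V : Type*} (f : V → ℕ) : Sym2 V → ℕ :=
  Sym2.lift ⟨fun u v => (f u + f v) % 2, fun u v => by simp [add_comm]⟩

/-- The number of edges of `G` whose induced label under `f` is `i`. -/
noncomputable def eCountN {V : Type*} (G : SimpleGraph V) (f : V → ℕ) (i : ℕ) : ℕ :=
  {e ∈ G.edgeSet | edgeLabelN f e = i}.ncard

section Aux
variable {n : ℕ}

lemma zmod_cast_ne_zero (hn : 5 ≤ n) (k : ℕ) (hk1 : k ≠ 0) (hk : k < n) : (k : ZMod n) ≠ 0 := by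
  haveI : NeZero n := ⟨by omega⟩
  intro h
  rw [ZMod.natCast_eq_zero_iff] at h
  have := Nat.le_of_dvd (by omega) h
  omega

lemma circulant_adj (hn : 5 ≤ n) (u v : ZMod n) :
    (circulant n 2).Adj u v ↔ v = u + 1 ∨ v = u + 2 ∨ u = v + 1 ∨ u = v + 2 := by
  have h1 : (1 : ZMod n) ≠ 0 := by
    simpa using zmod_cast_ne_zero hn 1 (by omega) (by omega)
  have h2 : (2 : ZMod n) ≠ 0 := by
    have := zmod_cast_ne_zero hn 2 (by omega) (by omega); push_cast at this; exact this
  simp only [circulant, SimpleGraph.fromRel_adj]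
  constructor
  · rintro ⟨hne, h | h⟩ <;> obtain ⟨k, hk1, hk2, hk⟩ := h <;>
      interval_cases k <;> push_cast at hk <;> rw [sub_eq_iff_eq_add'] at hk
    · exact Or.inl hk
    · exact Or.inr (Or.inl hk)
    · exact Or.inr (Or.inr (Or.inl hk))
    · exact Or.inr (Or.inr (Or.inr hk))
  · rintro (h | h | h | h)
    · exact ⟨fun he => h1 (by rwa [he, left_eq_add] at h),
        Or.inl ⟨1, by simp, by simp, by rw [h]; push_cast; ring⟩⟩
    · exact ⟨fun he => h2 (by rwa [he, left_eq_add] at h),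
        Or.inl ⟨2, by simp, by simp, by rw [h]; push_cast; ring⟩⟩
    · exact ⟨fun he => h1 (by rwa [← he, left_eq_add] at h),
        Or.inr ⟨1, by simp, by simp, by rw [h]; push_cast; ring⟩⟩
    · exact ⟨fun he => h2 (by rwa [← he, left_eq_add] at h),
        Or.inr ⟨2, by simp, by simp, by rw [h]; push_cast; ring⟩⟩

lemma edge_decomp (hn : 5 ≤ n) (f : ZMod n → ℕ) (i : ℕ) :
    {e ∈ (circulant n 2).edgeSet | edgeLabelN f e = i} =
      ((fun v => s(v, v + 1)) '' {v : ZMod n | (f v + f (v + 1)) % 2 = i}) ∪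
      ((fun v => s(v, v + 2)) '' {v : ZMod n | (f v + f (v + 2)) % 2 = i}) := by
  ext e
  induction e using Sym2.ind with
  | _ u v =>
    simp only [Set.mem_setOf_eq, Set.mem_union, Set.mem_image, SimpleGraph.mem_edgeSet,
      edgeLabelN, Sym2.lift_mk]
    constructor
    · rintro ⟨hadj, hlab⟩
      rw [circulant_adj hn] at hadj
      rcases hadj with h | h | h | h
      · exact Or.inl ⟨u, by rw [← h]; exact hlab, by rw [h]⟩
      · exact Or.inr ⟨u, by rw [← h]; exact hlab, by rw [h]⟩
      · exact Or.inl ⟨v, by rw [h] at hlab; omega, by rw [h, Sym2.eq_swap]⟩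
      · exact Or.inr ⟨v, by rw [h] at hlab; omega, by rw [h, Sym2.eq_swap]⟩
    · rintro (⟨w, hw, he⟩ | ⟨w, hw, he⟩) <;>
        rw [Sym2.eq_iff] at he <;>
        rcases he with ⟨h1, h2⟩ | ⟨h1, h2⟩ <;> subst h1 <;> subst h2
      · exact ⟨(circulant_adj hn _ _).2 (Or.inl rfl), hw⟩
      · exact ⟨(circulant_adj hn _ _).2 (Or.inr (Or.inr (Or.inl rfl))), by omega⟩
      · exact ⟨(circulant_adj hn _ _).2 (Or.inr (Or.inl rfl)), hw⟩
      · exact ⟨(circulant_adj hn _ _).2 (Or.inr (Or.inr (Or.inr rfl))), by omega⟩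

lemma step_inj (d : ZMod n) (hd : d + d ≠ 0) :
    Function.Injective (fun v : ZMod n => s(v, v + d)) := by
  intro v w h
  simp only [Sym2.eq_iff] at h
  rcases h with ⟨h1, _⟩ | ⟨h1, h2⟩
  · exact h1
  · exfalso; apply hd
    have hw : w = w + (d + d) := by rw [← add_assoc, ← h1, h2]
    rwa [left_eq_add] at hw

lemma even_parity_count [NeZero n] (f : ZMod n → ℕ) (d : ZMod n) :
    Even (Finset.univ.filter (fun v : ZMod n => (f v + f (v + d)) % 2 = 1)).card := by
  classical
  have h1 : (Finset.univ.filter (fun v : ZMod n => (f v + f (v + d)) % 2 = 1)).card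
      = ∑ v : ZMod n, (f v + f (v + d)) % 2 := by
    rw [Finset.card_filter]
    refine Finset.sum_congr rfl fun v _ => ?_
    have := Nat.mod_two_eq_zero_or_one (f v + f (v + d))
    split <;> omega
  rw [h1, Nat.even_iff, ← Finset.sum_nat_mod]
  have h2 : ∑ v : ZMod n, (f v + f (v + d)) = ∑ v : ZMod n, f v + ∑ v : ZMod n, f (v + d) := by
    rw [Finset.sum_add_distrib]
  have h3 : ∑ v : ZMod n, f (v + d) = ∑ v : ZMod n, f v :=
    Fintype.sum_equiv (Equiv.addRight d) _ _ (fun v => rfl)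
  omega

lemma parity_count_total [NeZero n] (f : ZMod n → ℕ) (d : ZMod n) :
    (Finset.univ.filter (fun v : ZMod n => (f v + f (v + d)) % 2 = 0)).card
      + (Finset.univ.filter (fun v : ZMod n => (f v + f (v + d)) % 2 = 1)).card = n := by
  classical
  have h := Finset.card_filter_add_card_filter_not
    (s := (Finset.univ : Finset (ZMod n))) (p := fun v => (f v + f (v + d)) % 2 = 0)
  rw [Finset.card_univ, ZMod.card] at h
  have heq : (Finset.univ.filter (fun a : ZMod n => ¬(f a + f (a + d)) % 2 = 0))
      = Finset.univ.filter (fun v : ZMod n => (f v + f (v + d)) % 2 = 1) := by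
    apply Finset.filter_congr
    intro v _
    omega
  rw [heq] at h
  exact h

lemma eCount_eq (hn : 5 ≤ n) (f : ZMod n → ℕ) (i : ℕ) :
    haveI : NeZero n := ⟨by omega⟩
    eCountN (circulant n 2) f i =
      (Finset.univ.filter (fun v : ZMod n => (f v + f (v + 1)) % 2 = i)).card
      + (Finset.univ.filter (fun v : ZMod n => (f v + f (v + 2)) % 2 = i)).card := by
  haveI : NeZero n := ⟨by omega⟩
  classical
  have h1 : (1 : ZMod n) ≠ 0 := by
    simpa using zmod_cast_ne_zero hn 1 (by omega) (by omega)
  have h2 : (2 : ZMod n) ≠ 0 := by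
    have := zmod_cast_ne_zero hn 2 (by omega) (by omega); push_cast at this; exact this
  have h3 : (3 : ZMod n) ≠ 0 := by
    have := zmod_cast_ne_zero hn 3 (by omega) (by omega); push_cast at this; exact this
  have h4 : (4 : ZMod n) ≠ 0 := by
    have := zmod_cast_ne_zero hn 4 (by omega) (by omega); push_cast at this; exact this
  have hdis : Disjoint
      ((fun v => s(v, v + 1)) '' {v : ZMod n | (f v + f (v + 1)) % 2 = i})
      ((fun v => s(v, v + 2)) '' {v : ZMod n | (f v + f (v + 2)) % 2 = i}) := by
    rw [Set.disjoint_left]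
    rintro e ⟨v, -, rfl⟩ ⟨w, -, hw⟩
    rw [Sym2.eq_iff] at hw
    rcases hw with ⟨ha, hb⟩ | ⟨ha, hb⟩
    · exact h1 (by linear_combination hb - ha)
    · exact h3 (by linear_combination hb - ha)
  rw [eCountN, edge_decomp hn f i,
    Set.ncard_union_eq hdis (Set.toFinite _) (Set.toFinite _),
    Set.ncard_image_of_injective _ (step_inj 1 (by rw [show (1:ZMod n)+1 = 2 by ring]; exact h2)),
    Set.ncard_image_of_injective _ (step_inj 2 (by rw [show (2:ZMod n)+2 = 4 by ring]; exact h4))]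
  congr 1 <;>
  · rw [← Set.ncard_coe_finset]
    congr 1
    ext v
    simp

end Aux

/-- For odd `n ≥ 5`, the circulant graph `Γ(n, ±{1,2})` is not Fibonacci cordial: every
injective labeling of its vertices by Fibonacci numbers `F_0, ..., F_n` has edge-label
imbalance at least 2. -/
theorem circulant_n2_odd_not_fibonacci_cordial (n : ℕ) (hn : 5 ≤ n) (hodd : Odd n) :
    ∀ f : ZMod n → ℕ, Function.Injective f → (∀ v, ∃ k ≤ n, f v = Nat.fib k) →
      2 ≤ |(eCountN (circulant n 2) f 0 : ℤ) - (eCountN (circulant n 2) f 1 : ℤ)| := by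
  intro f _ _
  haveI : NeZero n := ⟨by omega⟩
  classical
  have e0 := eCount_eq hn f 0
  have e1 := eCount_eq hn f 1
  have t1 := parity_count_total (n := n) f 1
  have t2 := parity_count_total (n := n) f 2
  obtain ⟨p, hp⟩ := even_parity_count (n := n) f 1
  obtain ⟨q, hq⟩ := even_parity_count (n := n) f 2
  obtain ⟨m, hm⟩ := hodd
  set x := (eCountN (circulant n 2) f 0 : ℤ) - (eCountN (circulant n 2) f 1 : ℤ) with hx
  rcases le_or_gt 0 x with h | h
  · rw [abs_of_nonneg h]
    rw [hx]; push_cast [e0, e1]; omega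
  · rw [abs_of_neg h]
    rw [hx]; push_cast [e0, e1]; omega
end

section
/- For a 2j-regular graph G, the imbalance e_f(0) − e_f(1) of any ℤ-valued vertex labeling f is congruent modulo 4 to the imbalance of the constant-zero labeling, which equals |E(G)| = n·j; hence if n·j ≡ 2 (mod 4) then no labeling achieves |e_f(0) − e_f(1)| ≤ 1. -/
/-- The induced edge label `(f u + f v) mod 2` on an edge of a graph. -/
def edgeLabel {V : Type*} (f : V → ℤ) : Sym2 V → ℤ :=
  Sym2.lift ⟨fun u v => (f u + f v) % 2, fun u v => by simp [add_comm]⟩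

/-- The number of edges of `G` whose induced label under `f` is `i`. -/
noncomputable def eCount {V : Type*} (G : SimpleGraph V) (f : V → ℤ) (i : ℤ) : ℕ :=
  {e ∈ G.edgeSet | edgeLabel f e = i}.ncard

open Finset

lemma edgeLabel_zero_or_one {V : Type*} (f : V → ℤ) (e : Sym2 V) :
    edgeLabel f e = 0 ∨ edgeLabel f e = 1 := by
  induction e using Sym2.ind with
  | _ u v => simpa [edgeLabel] using Int.emod_two_eq (f u + f v)

lemma eCount_eq_card {V : Type*} [Fintype V] (G : SimpleGraph V) [DecidableRel G.Adj]
    (f : V → ℤ) (i : ℤ) :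
    eCount G f i = #(G.edgeFinset.filter (fun e => edgeLabel f e = i)) := by
  rw [eCount, show {e ∈ G.edgeSet | edgeLabel f e = i}
      = ↑(G.edgeFinset.filter (fun e => edgeLabel f e = i)) by
    ext e; simp [SimpleGraph.mem_edgeFinset]]
  exact Set.ncard_coe_finset _

lemma eCount_one_even {V : Type*} [Fintype V] (G : SimpleGraph V) [DecidableRel G.Adj]
    (j : ℕ) (hreg : ∀ v : V, G.degree v = 2 * j) (f : V → ℤ) :
    2 ∣ eCount G f 1 := by
  classical
  set F : V → ZMod 2 := fun v => ((f v : ℤ) : ZMod 2) with hF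
  -- sum of the casted labels over the edges, computed via darts
  have hdartsum : ∑ d : G.Dart, F d.fst
      = ∑ e ∈ G.edgeFinset, ((edgeLabel f e : ℤ) : ZMod 2) := by
    have hfib := Finset.sum_fiberwise_of_maps_to (s := (Finset.univ : Finset G.Dart))
        (t := G.edgeFinset) (g := fun d : G.Dart => d.edge)
        (fun d _ => (SimpleGraph.mem_edgeFinset).2 d.edge_mem) (fun d => F d.fst)
    rw [← hfib]
    refine Finset.sum_congr rfl fun e he => ?_
    rw [SimpleGraph.mem_edgeFinset] at he
    induction e using Sym2.ind with
    | _ u v =>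
      have hadj : G.Adj u v := he
      set d0 : G.Dart := ⟨(u, v), hadj⟩ with hd0
      have hfib : (Finset.univ.filter (fun d : G.Dart => d.edge = s(u, v)))
          = {d0, d0.symm} := by
        have := d0.edge_fiber
        simpa [hd0, SimpleGraph.Dart.edge] using this
      rw [hfib, Finset.sum_insert (by simpa using d0.symm_ne.symm),
        Finset.sum_singleton]
      have : d0.symm.fst = v := rfl
      simp only [hd0, this, hF, edgeLabel, Sym2.lift_mk]
      have : (((f u + f v) % (2 : ℕ) : ℤ) : ZMod 2) = ((f u + f v : ℤ) : ZMod 2) :=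
        ZMod.intCast_mod (f u + f v) 2
      push_cast at this ⊢
      rw [this]
      rfl
  -- dart sum vanishes since all degrees are even
  have hdartzero : ∑ d : G.Dart, F d.fst = 0 := by
    have hfib := Finset.sum_fiberwise_of_maps_to (s := (Finset.univ : Finset G.Dart))
        (t := (Finset.univ : Finset V)) (g := fun d : G.Dart => d.fst)
        (fun d _ => Finset.mem_univ d.fst) (fun d => F d.fst)
    rw [← hfib]
    refine Finset.sum_eq_zero fun v _ => ?_
    have hcard : #(Finset.univ.filter (fun d : G.Dart => d.fst = v)) = G.degree v :=
      G.dart_fst_fiber_card_eq_degree v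
    have : ∑ d ∈ Finset.univ.filter (fun d : G.Dart => d.fst = v), F d.fst
        = (#(Finset.univ.filter (fun d : G.Dart => d.fst = v))) • F v := by
      rw [Finset.sum_congr rfl fun d hd => by
        rw [(Finset.mem_filter.1 hd).2], Finset.sum_const]
    rw [this, hcard, hreg v, nsmul_eq_mul, Nat.cast_mul, ZMod.natCast_self]
    simp only [zero_mul]
  -- the sum of casted labels is the cast of `eCount G f 1`
  have hsum : ∑ e ∈ G.edgeFinset, ((edgeLabel f e : ℤ) : ZMod 2)
      = ((eCount G f 1 : ℕ) : ZMod 2) := by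
    rw [← Finset.sum_filter_add_sum_filter_not G.edgeFinset (fun e => edgeLabel f e = 1)]
    have h1 : ∑ e ∈ G.edgeFinset.filter (fun e => edgeLabel f e = 1),
        ((edgeLabel f e : ℤ) : ZMod 2) = ((eCount G f 1 : ℕ) : ZMod 2) := by
      calc ∑ e ∈ G.edgeFinset.filter (fun e => edgeLabel f e = 1),
            ((edgeLabel f e : ℤ) : ZMod 2)
          = ∑ _e ∈ G.edgeFinset.filter (fun e => edgeLabel f e = 1), (1 : ZMod 2) :=
            Finset.sum_congr rfl (fun e he => by simp only [(Finset.mem_filter.1 he).2, Int.cast_one])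
        _ = _ := by rw [Finset.sum_const, eCount_eq_card]; simp
    have h0 : ∑ e ∈ G.edgeFinset.filter (fun e => ¬ edgeLabel f e = 1),
        ((edgeLabel f e : ℤ) : ZMod 2) = 0 := by
      refine Finset.sum_eq_zero fun e he => ?_
      rcases edgeLabel_zero_or_one f e with h | h
      · rw [h]; norm_num
      · exact absurd h (Finset.mem_filter.1 he).2
    rw [h1, h0, add_zero]
  have hz : ((eCount G f 1 : ℕ) : ZMod 2) = 0 := by
    rw [← hsum, ← hdartsum, hdartzero]
  exact (ZMod.natCast_eq_zero_iff _ 2).1 hz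

/-- For a `2j`-regular graph `G` on `n` vertices: the imbalance of every labeling is
congruent mod 4 to that of the constant-zero labeling, which equals `|E(G)| = n·j`;
hence if `n·j ≡ 2 (mod 4)` no labeling achieves imbalance at most 1. -/
theorem regular_imbalance_mod_four {V : Type*} [Fintype V] (G : SimpleGraph V) (n j : ℕ)
    (hcard : Fintype.card V = n)
    (hreg : ∀ v : V, (G.neighborSet v).ncard = 2 * j) :
    (∀ f : V → ℤ,
      ((eCount G f 0 : ℤ) - (eCount G f 1 : ℤ)) ≡
        ((eCount G (fun _ => 0) 0 : ℤ) - (eCount G (fun _ => 0) 1 : ℤ)) [ZMOD 4]) ∧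
    ((eCount G (fun _ => 0) 0 : ℤ) - (eCount G (fun _ => 0) 1 : ℤ) = (n * j : ℕ)) ∧
    G.edgeSet.ncard = n * j ∧
    ((n * j) % 4 = 2 →
      ∀ f : V → ℤ, ¬ (|(eCount G f 0 : ℤ) - (eCount G f 1 : ℤ)| ≤ 1)) := by
  classical
  have hdeg : ∀ v : V, G.degree v = 2 * j := by
    intro v
    rw [← SimpleGraph.card_neighborSet_eq_degree, ← hreg v]
    rw [Set.ncard_eq_toFinset_card']
    simp [SimpleGraph.neighborFinset]
  -- edge count
  have hE : #G.edgeFinset = n * j := by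
    have hh := G.sum_degrees_eq_twice_card_edges
    rw [Finset.sum_congr rfl (fun v _ => hdeg v), Finset.sum_const,
      Finset.card_univ, hcard, smul_eq_mul] at hh
    have : n * (2 * j) = 2 * (n * j) := by ring
    omega
  have hEset : G.edgeSet.ncard = n * j := by
    rw [Set.ncard_eq_toFinset_card']
    simpa [SimpleGraph.edgeFinset] using hE
  -- zero labeling
  have hlab0 : ∀ e : Sym2 V, edgeLabel (fun _ : V => (0 : ℤ)) e = 0 := by
    intro e; induction e using Sym2.ind with
    | _ u v => simp [edgeLabel]
  have h00 : eCount G (fun _ => (0 : ℤ)) 0 = n * j := by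
    rw [eCount, show {e ∈ G.edgeSet | edgeLabel (fun _ : V => (0:ℤ)) e = 0} = G.edgeSet
        by ext e; simp [hlab0]]
    exact hEset
  have h01 : eCount G (fun _ => (0 : ℤ)) 1 = 0 := by
    rw [eCount, show {e ∈ G.edgeSet | edgeLabel (fun _ : V => (0:ℤ)) e = 1} = (∅ : Set (Sym2 V))
        by ext e; simp [hlab0]]
    simp
  -- eCount 0 + eCount 1 = |E| for any f
  have hsplit : ∀ f : V → ℤ, eCount G f 0 + eCount G f 1 = n * j := by
    intro f
    rw [eCount_eq_card, eCount_eq_card, ← hE]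
    rw [show G.edgeFinset.filter (fun e => edgeLabel f e = 0)
        = G.edgeFinset.filter (fun e => ¬ edgeLabel f e = 1) by
      refine Finset.filter_congr fun e _ => ?_
      rcases edgeLabel_zero_or_one f e with h | h <;> simp [h]]
    rw [add_comm]
    exact Finset.card_filter_add_card_filter_not _
  have hmod : ∀ f : V → ℤ,
      ((eCount G f 0 : ℤ) - (eCount G f 1 : ℤ)) ≡
        ((eCount G (fun _ => 0) 0 : ℤ) - (eCount G (fun _ => 0) 1 : ℤ)) [ZMOD 4] := by
    intro f
    have h2 := eCount_one_even G j hdeg f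
    have h3 := hsplit f
    have h4 : (eCount G f 0 : ℤ) + (eCount G f 1 : ℤ) = ((n * j : ℕ) : ℤ) := by
      exact_mod_cast congrArg (Nat.cast : ℕ → ℤ) h3
    obtain ⟨k, hk⟩ := h2
    have hk' : (eCount G f 1 : ℤ) = 2 * k := by exact_mod_cast hk
    show _ % 4 = _ % 4
    rw [h00, h01]
    omega
  refine ⟨hmod, by rw [h00, h01]; simp, hEset, ?_⟩
  intro hnj f hle
  have := hmod f
  rw [h00, h01] at this
  have h4 : ((n * j : ℕ) : ℤ) % 4 = 2 := by omega
  rw [abs_le] at hle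
  have : ((eCount G f 0 : ℤ) - (eCount G f 1 : ℤ)) % 4
      = (((n * j : ℕ) : ℤ) - ((0:ℕ):ℤ)) % 4 := this
  omega
end
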